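/- Let σ ∈ (-1/2, 1/2), and for real parameters Ω ≥ 1 (playing the role of ⟨ω⟩) and Z ≥ 1 (playing the role of ⟨ζ⟩) with Z ≤ Ω, define M_σ(Ω,Z)^2 = Σ_{k≥1} 1/(k^2 (k^4 + Ω^4)(k^2 + Z^2)^σ). Then there exist constants C1, C2 > 0 depending only on σ such that C1 · Z^{-2σ}/Ω^4 ≤ M_σ(Ω,Z)^2 ≤ C2 · Z^{-2σ}/Ω^4 for all such Ω, Z. -/

import Mathlib

open Real

lemma aux_num_ub {σ x Z : ℝ} (hσ1 : -(1:ℝ)/2 < σ) (hσ2 : σ < 1/2) (hx : 1 ≤ x) (hZ : 1 ≤ Z) :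
    (x^2 + Z^2) ^ (-σ) ≤ Real.sqrt 2 * Z ^ (-2*σ) * x ^ (2*|σ|) := by
  have hx0 : (0:ℝ) < x := by linarith
  have hZ0 : (0:ℝ) < Z := by linarith
  have hs2 : (1:ℝ) ≤ Real.sqrt 2 := by
    nlinarith [Real.sq_sqrt (by norm_num : (0:ℝ) ≤ 2), Real.sqrt_nonneg 2]
  have hZ2 : (Z^2) ^ (-σ) = Z ^ (-2*σ) := by
    rw [← Real.rpow_natCast Z 2, ← Real.rpow_mul hZ0.le]
    norm_num
  have hZσ : (0:ℝ) ≤ Z ^ (-2*σ) := Real.rpow_nonneg hZ0.le _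
  rcases le_or_gt 0 σ with h | h
  · have h1 : (x^2 + Z^2) ^ (-σ) ≤ (Z^2) ^ (-σ) :=
      Real.rpow_le_rpow_of_nonpos (by positivity) (by nlinarith) (by linarith)
    have h2 : (1:ℝ) ≤ x ^ (2*|σ|) :=
      Real.one_le_rpow hx (by positivity)
    calc (x^2 + Z^2) ^ (-σ) ≤ Z ^ (-2*σ) := by rw [← hZ2]; exact h1
    _ = 1 * Z ^ (-2*σ) * 1 := by ring
    _ ≤ Real.sqrt 2 * Z ^ (-2*σ) * x ^ (2*|σ|) := by gcongr
  · have habs : |σ| = -σ := abs_of_neg h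
    have h1 : x^2 + Z^2 ≤ 2 * x^2 * Z^2 := by
      nlinarith [mul_nonneg (by nlinarith : (0:ℝ) ≤ x^2 - 1) (by nlinarith : (0:ℝ) ≤ Z^2 - 1),
        mul_pos (mul_pos hx0 hx0) (mul_pos hZ0 hZ0)]
    have h2 : (x^2 + Z^2) ^ (-σ) ≤ (2 * x^2 * Z^2) ^ (-σ) :=
      Real.rpow_le_rpow (by positivity) h1 (by linarith)
    have h3 : (2 * x^2 * Z^2 : ℝ) ^ (-σ) = (2:ℝ)^(-σ) * (x^2)^(-σ) * (Z^2)^(-σ) := by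
      rw [Real.mul_rpow (by positivity) (by positivity), Real.mul_rpow (by positivity) (by positivity)]
    have h4 : (2:ℝ)^(-σ) ≤ Real.sqrt 2 := by
      rw [show Real.sqrt 2 = (2:ℝ) ^ ((1:ℝ)/2) from Real.sqrt_eq_rpow 2]
      exact Real.rpow_le_rpow_of_exponent_le (by norm_num) (by linarith)
    have h5 : (x^2)^(-σ) = x ^ (2*|σ|) := by
      rw [← Real.rpow_natCast x 2, ← Real.rpow_mul hx0.le, habs]
      norm_num
    calc (x^2 + Z^2) ^ (-σ) ≤ (2:ℝ)^(-σ) * (x^2)^(-σ) * (Z^2)^(-σ) := h3 ▸ h2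
    _ = (2:ℝ)^(-σ) * Z ^ (-2*σ) * x ^ (2*|σ|) := by rw [h5, hZ2]; ring
    _ ≤ Real.sqrt 2 * Z ^ (-2*σ) * x ^ (2*|σ|) := by
        have : (0:ℝ) ≤ x ^ (2*|σ|) := Real.rpow_nonneg hx0.le _
        gcongr

lemma aux_num_lb {σ Z : ℝ} (hσ1 : -(1:ℝ)/2 < σ) (hσ2 : σ < 1/2) (hZ : 1 ≤ Z) :
    Z ^ (-2*σ) / Real.sqrt 2 ≤ (1 + Z^2) ^ (-σ) := by
  have hZ0 : (0:ℝ) < Z := by linarith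
  have hs2 : (1:ℝ) ≤ Real.sqrt 2 := by
    nlinarith [Real.sq_sqrt (by norm_num : (0:ℝ) ≤ 2), Real.sqrt_nonneg 2]
  have hZ2 : (Z^2) ^ (-σ) = Z ^ (-2*σ) := by
    rw [← Real.rpow_natCast Z 2, ← Real.rpow_mul hZ0.le]
    norm_num
  have hZσ : (0:ℝ) ≤ Z ^ (-2*σ) := Real.rpow_nonneg hZ0.le _
  rcases le_or_gt 0 σ with h | h
  · have h1 : (2 * Z^2 : ℝ) ^ (-σ) ≤ (1 + Z^2) ^ (-σ) :=
      Real.rpow_le_rpow_of_nonpos (by positivity) (by nlinarith) (by linarith)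
    have h3 : (2 * Z^2 : ℝ) ^ (-σ) = (2:ℝ)^(-σ) * (Z^2)^(-σ) :=
      Real.mul_rpow (by norm_num) (by positivity)
    have h4 : (1:ℝ) / Real.sqrt 2 ≤ (2:ℝ)^(-σ) := by
      rw [show (1:ℝ) / Real.sqrt 2 = (2:ℝ) ^ (-((1:ℝ)/2)) by
        rw [Real.rpow_neg (by norm_num), Real.sqrt_eq_rpow]; ring]
      exact Real.rpow_le_rpow_of_exponent_le (by norm_num) (by linarith)
    calc Z ^ (-2*σ) / Real.sqrt 2 = (1 / Real.sqrt 2) * Z ^ (-2*σ) := by ring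
    _ ≤ (2:ℝ)^(-σ) * (Z^2)^(-σ) := by rw [hZ2]; gcongr
    _ = (2 * Z^2 : ℝ) ^ (-σ) := h3.symm
    _ ≤ (1 + Z^2) ^ (-σ) := h1
  · have h1 : (Z^2 : ℝ) ^ (-σ) ≤ (1 + Z^2) ^ (-σ) :=
      Real.rpow_le_rpow (by positivity) (by nlinarith) (by linarith)
    calc Z ^ (-2*σ) / Real.sqrt 2 ≤ Z ^ (-2*σ) / 1 := by gcongr
    _ = (Z^2) ^ (-σ) := by rw [hZ2]; ring
    _ ≤ (1 + Z^2) ^ (-σ) := h1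

theorem stmt_7 (σ : ℝ) (hσ : σ ∈ Set.Ioo (-(1:ℝ)/2) (1/2)) :
    ∃ C1 > 0, ∃ C2 > 0, ∀ Ω Z : ℝ, 1 ≤ Z → Z ≤ Ω →
      C1 * Z ^ (-2*σ) / Ω^4
          ≤ (∑' k : ℕ, ((k+1:ℝ)^2 + Z^2) ^ (-σ) / ((k+1:ℝ)^2 * ((k+1:ℝ)^4 + Ω^4))) ∧
      (∑' k : ℕ, ((k+1:ℝ)^2 + Z^2) ^ (-σ) / ((k+1:ℝ)^2 * ((k+1:ℝ)^4 + Ω^4)))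
          ≤ C2 * Z ^ (-2*σ) / Ω^4 := by
  obtain ⟨hσ1, hσ2⟩ := hσ
  have hσabs : |σ| < 1/2 := abs_lt.2 ⟨by linarith, hσ2⟩
  have hs2 : (0:ℝ) < Real.sqrt 2 := Real.sqrt_pos.2 (by norm_num)
  set s : ℝ := 2 - 2*|σ| with hs_def
  have hs : 1 < s := by have := abs_nonneg σ; simp only [hs_def]; linarith
  -- summability of the comparison series
  have hg : Summable (fun k : ℕ => ((k:ℝ)+1) ^ (-s)) := by
    have h0 : Summable (fun n : ℕ => (n:ℝ) ^ (-s)) :=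
      Real.summable_nat_rpow.2 (by linarith)
    have h1 := h0.comp_injective (add_left_injective 1)
    refine h1.congr fun k => ?_
    simp only [Function.comp_apply]
    push_cast
    ring_nf
  set T : ℝ := ∑' k : ℕ, ((k:ℝ)+1) ^ (-s) with hT_def
  have hgpos : ∀ k : ℕ, (0:ℝ) < ((k:ℝ)+1) ^ (-s) := fun k =>
    Real.rpow_pos_of_pos (by positivity) _
  have hT : 0 < T := Summable.tsum_pos hg (fun k => (hgpos k).le) 0 (hgpos 0)
  refine ⟨1 / (2 * Real.sqrt 2), by positivity, Real.sqrt 2 * T, by positivity, ?_⟩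
  intro Ω Z hZ hZΩ
  have hΩ : (1:ℝ) ≤ Ω := le_trans hZ hZΩ
  have hΩ0 : (0:ℝ) < Ω := by linarith
  have hZ0 : (0:ℝ) < Z := by linarith
  have hZσ : (0:ℝ) ≤ Z ^ (-2*σ) := Real.rpow_nonneg hZ0.le _
  set f : ℕ → ℝ := fun k => ((k+1:ℝ)^2 + Z^2) ^ (-σ) / ((k+1:ℝ)^2 * ((k+1:ℝ)^4 + Ω^4)) with hf_def
  have hfnn : ∀ k, 0 ≤ f k := fun k => by
    have hx : (0:ℝ) < (k:ℝ)+1 := by positivity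
    apply div_nonneg (Real.rpow_nonneg (by positivity) _) (by positivity)
  set c : ℝ := Real.sqrt 2 * Z ^ (-2*σ) / Ω^4 with hc_def
  have hkey : ∀ k : ℕ, f k ≤ c * ((k:ℝ)+1) ^ (-s) := by
    intro k
    set x : ℝ := (k:ℝ)+1 with hx_def
    have hx : (1:ℝ) ≤ x := by simp [hx_def]
    have hx0 : (0:ℝ) < x := by linarith
    have hnum := aux_num_ub hσ1 hσ2 hx hZ
    have hden : x^2 * Ω^4 ≤ x^2 * (x^4 + Ω^4) := by
      have h1 : (0:ℝ) ≤ x^2 * x^4 := by positivity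
      nlinarith
    have hratio : x ^ (2*|σ|) / x ^ (2:ℕ) = x ^ (-s) := by
      rw [← Real.rpow_natCast x 2, ← Real.rpow_sub hx0]
      norm_num [hs_def]
    calc f k ≤ (Real.sqrt 2 * Z ^ (-2*σ) * x ^ (2*|σ|)) / (x^2 * Ω^4) := by
          apply div_le_div₀ (by positivity) hnum (by positivity) hden
    _ = c * (x ^ (2*|σ|) / x ^ (2:ℕ)) := by
          simp only [hc_def]
          field_simp
    _ = c * x ^ (-s) := by rw [hratio]
  have hfsum : Summable f :=
    Summable.of_nonneg_of_le hfnn hkey (hg.mul_left c)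
  constructor
  · -- lower bound via first term
    have h0 : f 0 ≤ ∑' k, f k := Summable.le_tsum hfsum 0 (fun j _ => hfnn j)
    have hf0 : f 0 = (1 + Z^2) ^ (-σ) / (1 + Ω^4) := by
      simp [hf_def]
    have hlb := aux_num_lb hσ1 hσ2 hZ
    have hden : (1:ℝ) + Ω^4 ≤ 2 * Ω^4 := by
      have h1 : (1:ℝ) ≤ Ω^4 := one_le_pow₀ hΩ
      linarith
    have : 1 / (2 * Real.sqrt 2) * Z ^ (-2*σ) / Ω^4 ≤ f 0 := by
      rw [hf0]
      have h1 : 1 / (2 * Real.sqrt 2) * Z ^ (-2*σ) / Ω^4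
          = (Z ^ (-2*σ) / Real.sqrt 2) / (2 * Ω^4) := by ring
      rw [h1]
      apply div_le_div₀ (Real.rpow_nonneg (by positivity) _) hlb (by positivity) hden
    linarith
  · -- upper bound
    have h1 : ∑' k : ℕ, f k ≤ ∑' k : ℕ, c * ((k:ℝ)+1) ^ (-s) :=
      Summable.tsum_le_tsum hkey hfsum (hg.mul_left c)
    have h2 : ∑' k : ℕ, c * ((k:ℝ)+1) ^ (-s) = c * T := tsum_mul_left
    have h3 : c * T = Real.sqrt 2 * T * Z ^ (-2*σ) / Ω^4 := by
      simp only [hc_def]; ring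
    linarith
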